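/- (Lemma 2.1: existence of an optimal control) For every M > 0 and every τ ≥ 0, the infimum defining t*(M,τ) is attained: t*(M,τ) is a finite real number with t*(M,τ) ≥ τ, and there exists u* ∈ U_M such that ‖y^τ(t*(M,τ); y₀, u*)‖ ≤ r. -/

import Mathlib

open RealInnerProductSpace Filter
open Topology Metric

theorem stmt_2
    {H : Type*} [NormedAddCommGroup H] [InnerProductSpace ℝ H] [CompleteSpace H]
    (lam : ℝ) (hlam : 0 < lam)
    (S : ℝ → H →L[ℝ] H)
    (hS0 : S 0 = ContinuousLinearMap.id ℝ H)
    (hSadd : ∀ s t : ℝ, 0 ≤ s → 0 ≤ t → S (s + t) = (S s).comp (S t))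
    (hSsa : ∀ t : ℝ, 0 ≤ t → ∀ x z : H, ⟪S t x, z⟫ = ⟪x, S t z⟫)
    (hScont : ∀ y : H, ContinuousOn (fun t => S t y) (Set.Ici (0 : ℝ)))
    (hSdecay : ∀ t : ℝ, 0 ≤ t → ∀ y : H, ‖S t y‖ ≤ Real.exp (-(lam * t)) * ‖y‖)
    (P : H →L[ℝ] H)
    (hPsa : ∀ x z : H, ⟪P x, z⟫ = ⟪x, P z⟫)
    (hPnorm : ∀ u : H, ‖P u‖ ≤ ‖u‖)
    (y₀ : H) (r : ℝ) (hr : 0 < r)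
    (tS : ℝ → ℝ → ℝ)
    (htS : ∀ M τ : ℝ, tS M τ =
      sInf {T : ℝ | τ ≤ T ∧ ∃ u : H, ‖u‖ ≤ M ∧ ‖S T y₀ + S (T - τ) (P u)‖ ≤ r})
    (M τ : ℝ) (hM : 0 < M) (hτ : 0 ≤ τ) :
    τ ≤ tS M τ ∧
    ∃ u : H, ‖u‖ ≤ M ∧ ‖S (tS M τ) y₀ + S (tS M τ - τ) (P u)‖ ≤ r := by
  rw [htS M τ]
  set A : Set ℝ := {T : ℝ | τ ≤ T ∧ ∃ u : H, ‖u‖ ≤ M ∧ ‖S T y₀ + S (T - τ) (P u)‖ ≤ r}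
    with hAdef
  -- A is nonempty
  have hAne : A.Nonempty := by
    have h1 : Tendsto (fun T : ℝ => Real.exp (-(lam * T)) * ‖y₀‖) atTop (𝓝 0) := by
      have h2 : Tendsto (fun T : ℝ => lam * T) atTop atTop :=
        Tendsto.const_mul_atTop hlam tendsto_id
      have h3 : Tendsto (fun T : ℝ => -(lam * T)) atTop atBot := tendsto_neg_atBot_iff.mpr h2
      have h4 : Tendsto (fun T : ℝ => Real.exp (-(lam * T))) atTop (𝓝 0) :=
        Real.tendsto_exp_atBot.comp h3
      simpa using h4.mul_const ‖y₀‖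
    obtain ⟨T₀, hT₀r, hT₀τ⟩ := ((h1.eventually_lt_const hr).and (eventually_ge_atTop τ)).exists
    refine ⟨T₀, hT₀τ, 0, by simpa using hM.le, ?_⟩
    have : ‖S T₀ y₀ + S (T₀ - τ) (P 0)‖ = ‖S T₀ y₀‖ := by simp
    rw [this]
    exact (hSdecay T₀ (hτ.trans hT₀τ) y₀).trans hT₀r.le
  have hbdd : BddBelow A := ⟨τ, fun T hT => hT.1⟩
  have hts : τ ≤ sInf A := le_csInf hAne fun T hT => hT.1
  set t := sInf A with htdef
  have ht0 : (0 : ℝ) ≤ t := hτ.trans hts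
  -- A is upward closed
  have hup : ∀ T ∈ A, ∀ T', T ≤ T' → T' ∈ A := by
    rintro T ⟨hτT, u, huM, hur⟩ T' hTT'
    refine ⟨hτT.trans hTT', u, huM, ?_⟩
    have hT0 : (0 : ℝ) ≤ T := hτ.trans hτT
    have h1 : S T' y₀ + S (T' - τ) (P u) = S (T' - T) (S T y₀ + S (T - τ) (P u)) := by
      have e1 : S T' = (S (T' - T)).comp (S T) := by
        have := hSadd (T' - T) T (by linarith) hT0
        rwa [sub_add_cancel] at this
      have e2 : S (T' - τ) = (S (T' - T)).comp (S (T - τ)) := by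
        have := hSadd (T' - T) (T - τ) (by linarith) (by linarith)
        rwa [show T' - T + (T - τ) = T' - τ by ring] at this
      rw [e1, e2, map_add]
      rfl
    rw [h1]
    have hd := hSdecay (T' - T) (by linarith) (S T y₀ + S (T - τ) (P u))
    have hexp : Real.exp (-(lam * (T' - T))) ≤ 1 := by
      rw [Real.exp_le_one_iff]
      nlinarith
    calc ‖S (T' - T) (S T y₀ + S (T - τ) (P u))‖
        ≤ Real.exp (-(lam * (T' - T))) * ‖S T y₀ + S (T - τ) (P u)‖ := hd
      _ ≤ 1 * r := mul_le_mul hexp hur (norm_nonneg _) zero_le_one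
      _ = r := one_mul r
  refine ⟨hts, ?_⟩
  -- approximating sequence
  have hTnA : ∀ n : ℕ, t + 1 / ((n : ℝ) + 1) ∈ A := by
    intro n
    have hpos : (0 : ℝ) < 1 / ((n : ℝ) + 1) := by positivity
    obtain ⟨T, hTA, hTlt⟩ :=
      exists_lt_of_csInf_lt hAne (show sInf A < t + 1 / ((n : ℝ) + 1) by
        rw [← htdef]; linarith)
    exact hup T hTA _ hTlt.le
  choose u huM hun using fun n => (hTnA n).2
  have hTt : Tendsto (fun n : ℕ => t + 1 / ((n : ℝ) + 1)) atTop (𝓝 t) := by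
    simpa using (tendsto_const_nhds (x := t)).add tendsto_one_div_add_atTop_nhds_zero_nat
  -- weak-* compactness
  set φ : ℕ → WeakDual ℝ H :=
    fun n => StrongDual.toWeakDual (InnerProductSpace.toDual ℝ H (u n)) with hφdef
  have hK : IsCompact (WeakDual.toStrongDual ⁻¹'
      Metric.closedBall (0 : StrongDual ℝ H) M) :=
    WeakDual.isCompact_closedBall 0 M
  have hmem : ∀ n, φ n ∈ WeakDual.toStrongDual ⁻¹'
      Metric.closedBall (0 : StrongDual ℝ H) M := by
    intro n
    simp only [Set.mem_preimage, mem_closedBall_zero_iff]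
    calc ‖WeakDual.toStrongDual (φ n)‖
        = ‖InnerProductSpace.toDual ℝ H (u n)‖ := rfl
      _ = ‖u n‖ := (InnerProductSpace.toDual ℝ H).norm_map (u n)
      _ ≤ M := huM n
  obtain ⟨a, haK, hacl⟩ :=
    hK.exists_mapClusterPt (f := atTop) (u := φ)
      (le_principal_iff.mpr (Filter.mem_map.mpr (Filter.Eventually.of_forall hmem)))
  obtain ⟨U, hUle, hUt⟩ := mapClusterPt_iff_ultrafilter.mp hacl
  set ustar : H := (InnerProductSpace.toDual ℝ H).symm (WeakDual.toStrongDual a) with hustar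
  have hustarM : ‖ustar‖ ≤ M := by
    calc ‖ustar‖ = ‖WeakDual.toStrongDual a‖ :=
          (InnerProductSpace.toDual ℝ H).symm.norm_map _
      _ ≤ M := mem_closedBall_zero_iff.mp haK
  -- evaluation convergence
  have heval : ∀ w : H, Tendsto (fun n => ⟪u n, w⟫) U (𝓝 ⟪ustar, w⟫) := by
    intro w
    have h1 : Tendsto (fun n => (φ n) w) U (𝓝 (a w)) :=
      ((WeakDual.eval_continuous (𝕜 := ℝ) (E := H) w).tendsto a).comp hUt
    have h2 : ∀ n, (φ n) w = ⟪u n, w⟫ := fun n => InnerProductSpace.toDual_apply_apply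
    have h3 : a w = ⟪ustar, w⟫ := (InnerProductSpace.toDual_symm_apply).symm
    rw [← h3]
    exact h1.congr h2
  -- continuity of the semigroup along the sequence
  have hScv : ∀ (z : H) (s : ℝ), 0 ≤ s →
      Tendsto (fun n : ℕ => S (s + 1 / ((n : ℝ) + 1)) z) U (𝓝 (S s z)) := by
    intro z s hs
    have hc : ContinuousWithinAt (fun t => S t z) (Set.Ici (0 : ℝ)) s :=
      hScont z s hs
    have htend : Tendsto (fun n : ℕ => s + 1 / ((n : ℝ) + 1)) U (𝓝[Set.Ici (0:ℝ)] s) := by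
      rw [tendsto_nhdsWithin_iff]
      constructor
      · have h5 : Tendsto (fun n : ℕ => s + 1 / ((n : ℝ) + 1)) atTop (𝓝 s) := by
          have := (tendsto_const_nhds (x := s) (f := atTop)).add
            tendsto_one_div_add_atTop_nhds_zero_nat
          simpa using this
        exact h5.mono_left hUle
      · refine Filter.Eventually.of_forall fun n => ?_
        have : (0 : ℝ) < 1 / ((n : ℝ) + 1) := by positivity
        exact Set.mem_Ici.mpr (by linarith)
    exact hc.tendsto.comp htend
  set v : H := S t y₀ + S (t - τ) (P ustar) with hv
  -- the main limit
  have hterm1 : Tendsto (fun n : ℕ => ⟪S (t + 1 / ((n : ℝ) + 1)) y₀, v⟫) U (𝓝 ⟪S t y₀, v⟫) :=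
    (hScv y₀ t ht0).inner tendsto_const_nhds
  set w : ℕ → H := fun n => P (S (t - τ + 1 / ((n : ℝ) + 1)) v) with hw
  set winf : H := P (S (t - τ) v) with hwinf
  have hwcv : Tendsto w U (𝓝 winf) :=
    (P.continuous.tendsto _).comp (hScv v (t - τ) (by linarith))
  have hterm2 : Tendsto (fun n : ℕ => ⟪u n, w n⟫) U (𝓝 ⟪ustar, winf⟫) := by
    have hsplit : ∀ n, ⟪u n, w n⟫ = ⟪u n, winf⟫ + ⟪u n, w n - winf⟫ := by
      intro n; rw [inner_sub_right]; ring
    have hz : Tendsto (fun n => ⟪u n, w n - winf⟫) U (𝓝 0) := by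
      have hb : ∀ n, ‖⟪u n, w n - winf⟫‖ ≤ M * ‖w n - winf‖ := by
        intro n
        rw [Real.norm_eq_abs]
        calc |⟪u n, w n - winf⟫| ≤ ‖u n‖ * ‖w n - winf‖ := abs_real_inner_le_norm _ _
          _ ≤ M * ‖w n - winf‖ :=
            mul_le_mul_of_nonneg_right (huM n) (norm_nonneg _)
      have hg : Tendsto (fun n => M * ‖w n - winf‖) U (𝓝 0) := by
        have h6 : Tendsto (fun n => w n - winf) (U : Filter ℕ) (𝓝 (winf - winf)) :=
          hwcv.sub tendsto_const_nhds
        rw [sub_self] at h6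
        have := h6.norm.const_mul M
        simpa using this
      exact squeeze_zero_norm hb hg
    have := (heval winf).add hz
    rw [add_zero] at this
    exact this.congr fun n => (hsplit n).symm
  have hkey : Tendsto
      (fun n : ℕ => ⟪S (t + 1 / ((n : ℝ) + 1)) y₀ +
        S (t + 1 / ((n : ℝ) + 1) - τ) (P (u n)), v⟫) U (𝓝 ⟪v, v⟫) := by
    have heq : ∀ n : ℕ, ⟪S (t + 1 / ((n : ℝ) + 1)) y₀ +
        S (t + 1 / ((n : ℝ) + 1) - τ) (P (u n)), v⟫
        = ⟪S (t + 1 / ((n : ℝ) + 1)) y₀, v⟫ + ⟪u n, w n⟫ := by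
      intro n
      have hpos : (0 : ℝ) < 1 / ((n : ℝ) + 1) := by positivity
      have harg : t + 1 / ((n : ℝ) + 1) - τ = t - τ + 1 / ((n : ℝ) + 1) := by ring
      rw [inner_add_left, harg, hSsa (t - τ + 1 / ((n : ℝ) + 1)) (by linarith) (P (u n)) v,
        hPsa (u n) (S (t - τ + 1 / ((n : ℝ) + 1)) v)]
    have hvv : ⟪v, v⟫ = ⟪S t y₀, v⟫ + ⟪ustar, winf⟫ := by
      rw [hv, inner_add_left, hwinf, ← hPsa ustar (S (t - τ) v),
        ← hSsa (t - τ) (by linarith) (P ustar) v]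
    rw [hvv]
    exact (hterm1.add hterm2).congr fun n => (heq n).symm
  have hbound : ∀ n : ℕ, ⟪S (t + 1 / ((n : ℝ) + 1)) y₀ +
      S (t + 1 / ((n : ℝ) + 1) - τ) (P (u n)), v⟫ ≤ r * ‖v‖ := by
    intro n
    calc ⟪S (t + 1 / ((n : ℝ) + 1)) y₀ + S (t + 1 / ((n : ℝ) + 1) - τ) (P (u n)), v⟫
        ≤ ‖S (t + 1 / ((n : ℝ) + 1)) y₀ + S (t + 1 / ((n : ℝ) + 1) - τ) (P (u n))‖ * ‖v‖ :=
          real_inner_le_norm _ _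
      _ ≤ r * ‖v‖ := mul_le_mul_of_nonneg_right (hun n) (norm_nonneg v)
  have hfinal : ⟪v, v⟫ ≤ r * ‖v‖ :=
    le_of_tendsto hkey (Filter.Eventually.of_forall hbound)
  rw [real_inner_self_eq_norm_sq] at hfinal
  refine ⟨ustar, hustarM, ?_⟩
  show ‖v‖ ≤ r
  by_contra h
  push_neg at h
  nlinarith [norm_nonneg v]
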